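/- Let G be the 2×2 unitary matrix on C^2 defined by G = |+⟩⟨+| + e^{iθ}|−⟩⟨−|, where |±⟩ = (|0⟩ ± |1⟩)/√2 and e^{iθ} = (3+4i)/5. Then for every integer n, G^n|0⟩ = |0⟩ if and only if n = 0. -/

import Mathlib

open Matrix Complex

noncomputable def ketPlus : Fin 2 → ℂ := ![(Real.sqrt 2 : ℂ)⁻¹, (Real.sqrt 2 : ℂ)⁻¹]

noncomputable def ketMinus : Fin 2 → ℂ := ![(Real.sqrt 2 : ℂ)⁻¹, -(Real.sqrt 2 : ℂ)⁻¹]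

/-- G = |+⟩⟨+| + e^{iθ}|−⟩⟨−| with e^{iθ} = (3+4i)/5. -/
noncomputable def Gmat : Matrix (Fin 2) (Fin 2) ℂ :=
  Matrix.vecMulVec ketPlus (star ketPlus) +
    (((3 : ℂ) + 4 * Complex.I) / 5) • Matrix.vecMulVec ketMinus (star ketMinus)

noncomputable def zet : ℂ := ((3 : ℂ) + 4 * Complex.I) / 5



/-- ring hom ℤ[i] → ZMod 5 sending i to 2 -/
def toZMod5 : GaussianInt →+* ZMod 5 := Zsqrtd.lift ⟨2, by decide⟩

lemma key_nat (n : ℕ) (hn : 0 < n) (h : zet ^ n = 1) : False := by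
  have h5 : (5:ℂ) ≠ 0 := by norm_num
  have h1 : ((3:ℂ) + 4*Complex.I) ^ n = 5 ^ n := by
    have := h
    rw [zet, div_pow, div_eq_one_iff_eq (pow_ne_zero _ h5)] at this
    exact this
  have h2 : ((⟨3,4⟩ : GaussianInt) : ℂ) ^ n = ((5 : GaussianInt) : ℂ) ^ n := by
    rw [GaussianInt.toComplex_def']
    rw [show ((5 : GaussianInt) : ℂ) = 5 by simp [GaussianInt.toComplex_def]]
    convert h1 using 2 <;> norm_num
  have h3 : (⟨3,4⟩ : GaussianInt) ^ n = (5 : GaussianInt) ^ n := by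
    apply GaussianInt.toComplex_injective
    rw [map_pow, map_pow]
    exact h2
  have h4 := congrArg toZMod5 h3
  simp only [map_pow] at h4
  have e1 : toZMod5 (⟨3,4⟩ : GaussianInt) = 1 := by
    simp [toZMod5, Zsqrtd.lift]; decide
  have e2 : toZMod5 (5 : GaussianInt) = 0 := by
    simp [toZMod5]; decide
  rw [e1, e2, one_pow, zero_pow hn.ne'] at h4
  exact absurd h4 (by decide)

lemma key (n : ℤ) (h : zet ^ n = 1) : n = 0 := by
  by_contra hne
  have hz : zet ≠ 0 := by
    rw [zet]; intro h0
    have := congrArg Complex.im h0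
    simp [div_eq_mul_inv] at this
  rcases lt_or_gt_of_ne hne with hlt | hgt
  · have : zet ^ (-n).toNat = 1 := by
      rw [← zpow_natCast, Int.toNat_of_nonneg (by omega), _root_.zpow_neg, h, inv_one]
    exact key_nat _ (by omega) this
  · have : zet ^ n.toNat = 1 := by
      rw [← zpow_natCast, Int.toNat_of_nonneg (by omega)]; exact h
    exact key_nat _ (by omega) this


lemma sqrt2_sq : ((Real.sqrt 2 : ℂ))⁻¹ * ((Real.sqrt 2 : ℂ))⁻¹ = 1/2 := by
  rw [← mul_inv]
  norm_cast
  rw [Real.mul_self_sqrt (by norm_num)]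
  norm_num

lemma Gmat_plus : Gmat.mulVec ketPlus = ketPlus := by
  funext i
  fin_cases i <;>
    simp [Gmat, ketPlus, ketMinus, mulVec, dotProduct, vecMulVec, Fin.sum_univ_two,
      Complex.star_def, zet] <;> ring_nf <;>
    rw [show ((Real.sqrt 2:ℂ))⁻¹^3 = (1/2) * ((Real.sqrt 2:ℂ))⁻¹ by rw [pow_succ, sq, sqrt2_sq]] <;> ring

lemma Gmat_minus : Gmat.mulVec ketMinus = zet • ketMinus := by
  funext i
  fin_cases i <;>
    simp [Gmat, ketPlus, ketMinus, mulVec, dotProduct, vecMulVec, Fin.sum_univ_two,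
      Complex.star_def, zet] <;> ring_nf <;>
    rw [show ((Real.sqrt 2:ℂ))⁻¹^3 = (1/2) * ((Real.sqrt 2:ℂ))⁻¹ by rw [pow_succ, sq, sqrt2_sq]] <;> ring

/-- For every integer n, G^n |0⟩ = |0⟩ if and only if n = 0. -/

lemma zet_ne : zet ≠ 0 := by
  rw [zet]; intro h0
  have := congrArg Complex.im h0
  simp [div_eq_mul_inv] at this

lemma zpow_action (G : Matrix.unitaryGroup (Fin 2) ℂ)
    (hG : (G : Matrix (Fin 2) (Fin 2) ℂ) = Gmat) (n : ℤ) :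
    ((G ^ n : Matrix.unitaryGroup (Fin 2) ℂ) : Matrix (Fin 2) (Fin 2) ℂ).mulVec ketPlus
      = ketPlus ∧
    ((G ^ n : Matrix.unitaryGroup (Fin 2) ℂ) : Matrix (Fin 2) (Fin 2) ℂ).mulVec ketMinus
      = zet ^ n • ketMinus := by
  have hinvP : ((G⁻¹ : Matrix.unitaryGroup (Fin 2) ℂ) : Matrix (Fin 2) (Fin 2) ℂ).mulVec ketPlus
      = ketPlus := by
    have h1 : ((G⁻¹ : Matrix.unitaryGroup (Fin 2) ℂ) : Matrix (Fin 2) (Fin 2) ℂ) *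
        (G : Matrix (Fin 2) (Fin 2) ℂ) = 1 := by
      rw [← Submonoid.coe_mul, inv_mul_cancel]; rfl
    calc ((G⁻¹ : Matrix.unitaryGroup (Fin 2) ℂ) : Matrix (Fin 2) (Fin 2) ℂ).mulVec ketPlus
        = ((G⁻¹ : Matrix.unitaryGroup (Fin 2) ℂ) : Matrix (Fin 2) (Fin 2) ℂ).mulVec
            ((G : Matrix (Fin 2) (Fin 2) ℂ).mulVec ketPlus) := by rw [hG, Gmat_plus]
      _ = ketPlus := by rw [mulVec_mulVec, h1, one_mulVec]
  have hinvM : ((G⁻¹ : Matrix.unitaryGroup (Fin 2) ℂ) : Matrix (Fin 2) (Fin 2) ℂ).mulVec ketMinus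
      = zet⁻¹ • ketMinus := by
    have h1 : ((G⁻¹ : Matrix.unitaryGroup (Fin 2) ℂ) : Matrix (Fin 2) (Fin 2) ℂ) *
        (G : Matrix (Fin 2) (Fin 2) ℂ) = 1 := by
      rw [← Submonoid.coe_mul, inv_mul_cancel]; rfl
    have h2 : ((G⁻¹ : Matrix.unitaryGroup (Fin 2) ℂ) : Matrix (Fin 2) (Fin 2) ℂ).mulVec
        (zet • ketMinus) = ketMinus := by
      rw [← Gmat_minus, ← hG, mulVec_mulVec, h1, one_mulVec]
    rw [mulVec_smul] at h2
    calc ((G⁻¹ : Matrix.unitaryGroup (Fin 2) ℂ) : Matrix (Fin 2) (Fin 2) ℂ).mulVec ketMinus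
        = zet⁻¹ • (zet • ((G⁻¹ : Matrix.unitaryGroup (Fin 2) ℂ) :
            Matrix (Fin 2) (Fin 2) ℂ).mulVec ketMinus) := by
          rw [smul_smul, inv_mul_cancel₀ zet_ne, one_smul]
      _ = zet⁻¹ • ketMinus := by rw [h2]
  induction n using Int.induction_on with
  | zero => simp
  | succ k ih =>
    have hmul : ((G ^ ((k:ℤ)+1) : Matrix.unitaryGroup (Fin 2) ℂ) : Matrix (Fin 2) (Fin 2) ℂ)
        = ((G ^ (k:ℤ) : Matrix.unitaryGroup (Fin 2) ℂ) : Matrix (Fin 2) (Fin 2) ℂ) *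
          (G : Matrix (Fin 2) (Fin 2) ℂ) := by
      rw [_root_.zpow_add_one, Submonoid.coe_mul]
    constructor
    · rw [hmul, ← mulVec_mulVec, hG, Gmat_plus, ih.1]
    · rw [hmul, ← mulVec_mulVec, hG, Gmat_minus, mulVec_smul, ih.2, smul_smul]
      congr 1
      rw [zpow_add_one₀ zet_ne]; ring
  | pred k ih =>
    have hmul : ((G ^ (-(k:ℤ)-1) : Matrix.unitaryGroup (Fin 2) ℂ) : Matrix (Fin 2) (Fin 2) ℂ)
        = ((G ^ (-(k:ℤ)) : Matrix.unitaryGroup (Fin 2) ℂ) : Matrix (Fin 2) (Fin 2) ℂ) *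
          ((G⁻¹ : Matrix.unitaryGroup (Fin 2) ℂ) : Matrix (Fin 2) (Fin 2) ℂ) := by
      rw [_root_.zpow_sub_one, Submonoid.coe_mul]
    constructor
    · rw [hmul, ← mulVec_mulVec, hinvP, ih.1]
    · rw [hmul, ← mulVec_mulVec, hinvM, mulVec_smul, ih.2, smul_smul]
      congr 1
      rw [show (-(k:ℤ)-1) = -(k:ℤ) + (-1) by ring, zpow_add₀ zet_ne, _root_.zpow_neg, _root_.zpow_neg, zpow_one]; ring

theorem stmt_0 (G : Matrix.unitaryGroup (Fin 2) ℂ)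
    (hG : (G : Matrix (Fin 2) (Fin 2) ℂ) = Gmat) :
    ∀ n : ℤ, ((G ^ n : Matrix.unitaryGroup (Fin 2) ℂ) : Matrix (Fin 2) (Fin 2) ℂ).mulVec
      ![1, 0] = ![1, 0] ↔ n = 0 := by
  intro n
  constructor
  · intro h
    obtain ⟨hp, hm⟩ := zpow_action G hG n
    have he0 : (![1, 0] : Fin 2 → ℂ) =
        (Real.sqrt 2 : ℂ)⁻¹ • ketPlus + (Real.sqrt 2 : ℂ)⁻¹ • ketMinus := by
      funext i; fin_cases i <;> simp [ketPlus, ketMinus] <;>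
        rw [show ((Real.sqrt 2:ℂ))⁻¹ * ((Real.sqrt 2:ℂ))⁻¹ = 1/2 from sqrt2_sq] <;> ring
    rw [he0, mulVec_add, mulVec_smul, mulVec_smul, hp, hm] at h
    have h0 := congrFun h 1
    simp [ketPlus, ketMinus, smul_smul] at h0
    -- h0 : component 1 equation
    apply key
    have hs : ((Real.sqrt 2:ℂ))⁻¹ ≠ 0 := by
      apply inv_ne_zero
      simp [Real.sqrt_ne_zero']
    have h1 : (1/2 : ℂ) * zet ^ n = 1/2 := by
      rw [← sqrt2_sq]; linear_combination -h0
    linear_combination 2 * h1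
  · rintro rfl
    simp
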